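/- Let k be a field of characteristic zero, let n ≥ 1, 1 ≤ r ≤ n, d ≥ 1, and let p_1, …, p_r ∈ k^{n+1} be linearly independent vectors. Then the k-vector space of homogeneous polynomials F of degree d in k[x_0, …, x_n] having multiplicity ≥ d at each p_i (i.e., all iterated partial derivatives of F of order ≤ d−1, including F itself, vanish at each p_i) has dimension binomial(n−r+d, d). (Geometrically: the elements of |d(H−E_1−⋯−E_r)| are cones with vertex the span of the r points, and the system has the same dimension as |O_{P^{n−r}}(d)|.) -/

import Mathlib

open MvPolynomial

/-- The iterated partial derivative along a list of variable indices, as a linear map. -/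
noncomputable def iterPderiv (k : Type*) [CommSemiring k] {σ : Type*} (l : List σ) :
    MvPolynomial σ k →ₗ[k] MvPolynomial σ k :=
  l.foldr (fun i L => (pderiv i).toLinearMap ∘ₗ L) LinearMap.id

/-- The space of homogeneous forms of degree `d` with multiplicity at least `d`
(all iterated partial derivatives of order `< d`, including the form itself, vanish)
at each of the given points. -/
noncomputable def formsOfDegDWithMultD (k : Type*) [Field k] (n r d : ℕ)
    (p : Fin r → (Fin (n + 1) → k)) : Submodule k (MvPolynomial (Fin (n + 1)) k) :=
  homogeneousSubmodule (Fin (n + 1)) k d ⊓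
    ⨅ (i : Fin r) (l : List (Fin (n + 1))) (_ : l.length < d),
      LinearMap.ker ((aeval (p i)).toLinearMap ∘ₗ iterPderiv k l)

namespace StmtAux

variable {k : Type*} [CommSemiring k] {σ : Type*}

@[simp] lemma iterPderiv_nil : iterPderiv k ([] : List σ) = LinearMap.id := rfl

@[simp] lemma iterPderiv_cons (i : σ) (l : List σ) :
    iterPderiv k (i :: l) = (pderiv i).toLinearMap ∘ₗ iterPderiv k l := rfl

lemma degree_add' (a b : σ →₀ ℕ) : (a + b).degree = a.degree + b.degree := by
  simp only [Finsupp.degree_eq_weight_one, map_add]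

lemma degree_single' (i : σ) (n : ℕ) : (Finsupp.single i n).degree = n := by
  classical
  rcases eq_or_ne n 0 with h | h
  · simp [h, map_zero]
  · exact Finsupp.degree_single i n

lemma coeff_pderiv (i : σ) (F : MvPolynomial σ k) (γ : σ →₀ ℕ) :
    coeff γ (pderiv i F) = (γ i + 1 : ℕ) * coeff (γ + Finsupp.single i 1) F := by
  classical
  induction F using MvPolynomial.induction_on' with
  | monomial β c =>
    rw [pderiv_monomial, coeff_monomial, coeff_monomial]
    by_cases h : β = γ + Finsupp.single i 1
    · have h1 : β - Finsupp.single i 1 = γ := by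
        rw [h]; exact add_tsub_cancel_right γ (Finsupp.single i 1)
      have h2 : β i = γ i + 1 := by simp [h]
      simp [h, h1, h2, mul_comm]
    · rw [if_neg h, mul_zero]
      by_cases h1 : β - Finsupp.single i 1 = γ
      · have hβi : β i = 0 := by
          by_contra hne
          apply h
          ext t
          have ht1 := DFunLike.congr_fun h1 t
          simp only [Finsupp.tsub_apply] at ht1
          by_cases ht : t = i
          · subst ht
            simp only [Finsupp.single_eq_same] at ht1 ⊢
            simp only [Finsupp.add_apply, Finsupp.single_eq_same]
            omega
          · simp only [Finsupp.single_eq_of_ne' (Ne.symm ht), Nat.sub_zero] at ht1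
            simp [Finsupp.single_eq_of_ne' (Ne.symm ht), ht1]
        simp [h1, hβi]
      · simp [h1]
  | add F G hF hG => simp [hF, hG, mul_add]

lemma isHomogeneous_pderiv {F : MvPolynomial σ k} {d : ℕ} (h : F.IsHomogeneous d) (i : σ) :
    (pderiv i F).IsHomogeneous (d - 1) := by
  intro γ hγ
  rw [coeff_pderiv] at hγ
  have h2 : coeff (γ + Finsupp.single i 1) F ≠ 0 := by
    intro h'; rw [h', mul_zero] at hγ; exact hγ rfl
  have h3 := h h2
  rw [show (Finsupp.weight 1 : (_ →₀ ℕ) →+ ℕ) = Finsupp.degree from Finsupp.degree_eq_weight_one.symm] at h3 ⊢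
  have h4 : (γ + Finsupp.single i 1).degree = γ.degree + 1 := by
    rw [degree_add', degree_single']
  omega

lemma isHomogeneous_iterPderiv {F : MvPolynomial σ k} {d : ℕ} (h : F.IsHomogeneous d)
    (l : List σ) : (iterPderiv k l F).IsHomogeneous (d - l.length) := by
  induction l with
  | nil => simpa using h
  | cons t l ih =>
    have := isHomogeneous_pderiv ih t
    rw [iterPderiv_cons]
    simpa [Nat.sub_sub] using this

/-- The exponent multiset of a list of variables, as a `Finsupp`. -/
noncomputable def listDegree (l : List σ) : σ →₀ ℕ := (l.map fun t => Finsupp.single t 1).sum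

@[simp] lemma listDegree_nil : listDegree ([] : List σ) = 0 := rfl

@[simp] lemma listDegree_cons (t : σ) (l : List σ) :
    listDegree (t :: l) = Finsupp.single t 1 + listDegree l := by
  simp [listDegree]

lemma coeff_iterPderiv (l : List σ) (γ : σ →₀ ℕ) :
    ∃ c : ℕ, 0 < c ∧ ∀ F : MvPolynomial σ k,
      coeff γ (iterPderiv k l F) = c * coeff (γ + listDegree l) F := by
  induction l generalizing γ with
  | nil => exact ⟨1, one_pos, fun F => by simp⟩
  | cons t l ih =>
    obtain ⟨c, hc, hcoeff⟩ := ih (γ + Finsupp.single t 1)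
    refine ⟨(γ t + 1) * c, by positivity, fun F => ?_⟩
    rw [iterPderiv_cons, LinearMap.comp_apply]
    have : ((pderiv t).toLinearMap : MvPolynomial σ k →ₗ[k] MvPolynomial σ k)
        (iterPderiv k l F) = pderiv t (iterPderiv k l F) := rfl
    rw [this, coeff_pderiv, hcoeff, listDegree_cons, ← add_assoc]
    push_cast
    ring

lemma exists_list (β : σ →₀ ℕ) : ∃ l : List σ, l.length = β.degree ∧ listDegree l = β := by
  classical
  induction β using Finsupp.induction with
  | zero => exact ⟨[], by simp [map_zero]⟩
  | single_add a n f ha hn ih =>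
    obtain ⟨l, h1, h2⟩ := ih
    refine ⟨List.replicate n a ++ l, ?_, ?_⟩
    · simp [h1, degree_add', degree_single']
    · simp only [listDegree, List.map_append, List.map_replicate, List.sum_append,
        List.sum_replicate]
      rw [show (List.map (fun t => Finsupp.single t (1:ℕ)) l).sum = listDegree l from rfl,
        h2, Finsupp.smul_single, smul_eq_mul, mul_one]
lemma eval_single_homogeneous [DecidableEq σ] {G : MvPolynomial σ k} {e : ℕ}
    (hG : G.IsHomogeneous e) (j : σ) :
    eval (Pi.single j (1 : k)) G = coeff (Finsupp.single j e) G := by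
  conv_lhs => rw [G.as_sum]
  rw [map_sum]
  have key : ∀ β ∈ G.support, eval (Pi.single j (1 : k)) (monomial β (coeff β G))
      = if β = Finsupp.single j e then coeff β G else 0 := by
    intro β hβ
    rw [eval_monomial]
    by_cases h : β = Finsupp.single j e
    · subst h
      rw [if_pos rfl, Finsupp.prod_single_index (by simp)]
      simp
    · rw [if_neg h]
      have hdeg : β.degree = e := by
        have := hG (mem_support_iff.mp hβ)
        rwa [show (Finsupp.weight 1 : (_ →₀ ℕ) →+ ℕ) = Finsupp.degree from Finsupp.degree_eq_weight_one.symm] at this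
      have hex : ∃ t ∈ β.support, t ≠ j := by
        by_contra hc
        push_neg at hc
        have hβj : β = Finsupp.single j (β j) := by
          ext t
          by_cases ht : t = j
          · subst ht; simp
          · rw [Finsupp.single_eq_of_ne' (Ne.symm ht)]
            by_contra hne
            exact ht (hc t (Finsupp.mem_support_iff.mpr hne))
        rw [hβj, degree_single'] at hdeg
        exact h (by rw [hβj, hdeg])
      obtain ⟨t, ht, htj⟩ := hex
      have : (Finsupp.prod β fun t n => ((Pi.single j (1:k) : σ → k) t) ^ n) = 0 := by
        apply Finset.prod_eq_zero ht
        simp only []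
        rw [Pi.single_eq_of_ne htj, zero_pow (Finsupp.mem_support_iff.mp ht)]
      exact mul_eq_zero_of_right _ this
  rw [Finset.sum_congr rfl key, Finset.sum_ite_eq' G.support (Finsupp.single j e) (fun β => coeff β G)]
  split_ifs with h
  · rfl
  · exact (notMem_support_iff.mp h).symm

lemma eval_single_iterPderiv [DecidableEq σ] {F : MvPolynomial σ k} {d : ℕ}
    (hF : F.IsHomogeneous d) (l : List σ) (j : σ) :
    ∃ c : ℕ, 0 < c ∧ eval (Pi.single j (1 : k)) (iterPderiv k l F)
      = c * coeff (Finsupp.single j (d - l.length) + listDegree l) F := by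
  obtain ⟨c, hc, h⟩ := coeff_iterPderiv (k := k) l (Finsupp.single j (d - l.length))
  exact ⟨c, hc, by
    rw [eval_single_homogeneous (isHomogeneous_iterPderiv hF l) j, h F]⟩

section FieldPart

variable {k : Type*} [Field k]

lemma aeval_self_eq_eval {σ : Type*} (x : σ → k) (F : MvPolynomial σ k) :
    aeval x F = eval x F := by
  rw [← coe_aeval_eq_eval]; rfl

lemma mem_forms_iff {n r d : ℕ} {p : Fin r → (Fin (n + 1) → k)}
    {F : MvPolynomial (Fin (n + 1)) k} :
    F ∈ formsOfDegDWithMultD k n r d p ↔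
      F.IsHomogeneous d ∧ ∀ (i : Fin r) (l : List (Fin (n + 1))), l.length < d →
        eval (p i) (iterPderiv k l F) = 0 := by
  simp only [formsOfDegDWithMultD, Submodule.mem_inf, Submodule.mem_iInf, LinearMap.mem_ker,
    LinearMap.comp_apply, mem_homogeneousSubmodule, AlgHom.toLinearMap_apply,
    aeval_self_eq_eval]

end FieldPart
section StdSpace

variable {k : Type*} [Field k] [CharZero k]

lemma std_eq (n r d : ℕ) (hrn : r ≤ n) (hd : 1 ≤ d) :
    formsOfDegDWithMultD k n r d
        (fun i => Pi.single (⟨i.1, by omega⟩ : Fin (n + 1)) 1) =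
      Submodule.map
        (rename (fun t : Fin (n - r + 1) => (⟨r + t.1, by omega⟩ : Fin (n + 1)))).toLinearMap
        (homogeneousSubmodule (Fin (n - r + 1)) k d) := by
  set g : Fin (n - r + 1) → Fin (n + 1) := fun t => (⟨r + t.1, by omega⟩ : Fin (n + 1)) with hg
  have ginj : Function.Injective g := by
    intro a b hab
    have := congrArg Fin.val hab
    simp only [hg] at this
    exact Fin.ext (by omega)
  ext F
  rw [mem_forms_iff]
  constructor
  · rintro ⟨hhom, hcond⟩
    -- support claim
    have hsupp : ∀ β ∈ F.support, ∀ i : Fin r, β (⟨i.1, by omega⟩ : Fin (n + 1)) = 0 := by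
      intro β hβ i
      by_contra hne
      set j : Fin (n + 1) := ⟨i.1, by omega⟩
      have hdegβ : β.degree = d := by
        have := hhom (mem_support_iff.mp hβ)
        rwa [show (Finsupp.weight 1 : (_ →₀ ℕ) →+ ℕ) = Finsupp.degree from Finsupp.degree_eq_weight_one.symm] at this
      set β' : Fin (n + 1) →₀ ℕ := β - Finsupp.single j 1 with hβ'
      have hsum : Finsupp.single j 1 + β' = β := by
        ext t
        by_cases ht : t = j
        · subst ht
          simp only [Finsupp.add_apply, Finsupp.single_eq_same, hβ', Finsupp.tsub_apply]
          omega
        · simp only [Finsupp.add_apply, Finsupp.single_eq_of_ne' (Ne.symm ht), hβ',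
            Finsupp.tsub_apply, Finsupp.single_eq_of_ne' (Ne.symm ht)]
          omega
      have hdegβ' : β'.degree = d - 1 := by
        have := congrArg Finsupp.degree hsum
        rw [degree_add', degree_single', hdegβ] at this
        omega
      obtain ⟨l, hl1, hl2⟩ := exists_list β'
      have hlen : l.length < d := by rw [hl1, hdegβ']; omega
      obtain ⟨c, hc, heval⟩ := eval_single_iterPderiv hhom l j
      have h0 : eval (Pi.single j (1:k)) (iterPderiv k l F) = 0 := hcond i l hlen
      rw [heval] at h0
      rw [hl1, hdegβ', show d - (d - 1) = 1 by omega, hl2, hsum] at h0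
      have : coeff β F = 0 := by
        rcases mul_eq_zero.mp h0 with h | h
        · exact absurd h (by exact_mod_cast hc.ne')
        · exact h
      exact mem_support_iff.mp hβ this
    -- vars subset range
    have hvars : ↑F.vars ⊆ Set.range g := by
      intro v hv
      rw [Finset.mem_coe, mem_vars] at hv
      obtain ⟨β, hβ, hvβ⟩ := hv
      by_cases hvr : v.1 < r
      · exfalso
        have := hsupp β hβ ⟨v.1, hvr⟩
        rw [show (⟨v.1, by omega⟩ : Fin (n + 1)) = v from Fin.ext rfl] at this
        exact Finsupp.mem_support_iff.mp hvβ this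
      · exact ⟨⟨v.1 - r, by omega⟩, Fin.ext (by simp [hg]; omega)⟩
    obtain ⟨G, hG⟩ := exists_rename_eq_of_vars_subset_range F g ginj hvars
    exact ⟨G, (IsHomogeneous.rename_isHomogeneous_iff ginj).mp (hG ▸ hhom), hG⟩
  · rintro ⟨G, hG, rfl⟩
    have hhom : (rename g G).IsHomogeneous d := by
      exact (mem_homogeneousSubmodule d G).mp hG |>.rename_isHomogeneous
    refine ⟨hhom, fun i l hl => ?_⟩
    set j : Fin (n + 1) := ⟨i.1, by omega⟩
    obtain ⟨c, hc, heval⟩ := eval_single_iterPderiv hhom l j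
    show eval (Pi.single j (1:k)) (iterPderiv k l (rename g G)) = 0
    rw [heval]
    suffices h : coeff (Finsupp.single j (d - l.length) + listDegree l) (rename g G) = 0 by
      rw [h, mul_zero]
    by_contra h0
    obtain ⟨u, hu, -⟩ := coeff_rename_ne_zero g G _ h0
    have h1 := DFunLike.congr_fun hu j
    rw [Finsupp.mapDomain_notin_range] at h1
    · have h2 : (Finsupp.single j (d - l.length) + listDegree l) j ≥ d - l.length := by
        simp [Finsupp.add_apply]
      omega
    · rintro ⟨t, ht⟩
      have := congrArg Fin.val ht
      simp only [hg] at this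
      have : (j : ℕ) = r + t.1 := by omega
      have hj : (j : ℕ) = i.1 := rfl
      omega

end StdSpace
section Counting

variable {k : Type*} [Field k]


lemma homog_eq_span (σ : Type*) (d : ℕ) :
    homogeneousSubmodule σ k d =
      Submodule.span k (Set.range fun β : {β : σ →₀ ℕ // β.degree = d} =>
        (monomial β.1 (1 : k))) := by
  apply le_antisymm
  · intro F hF
    rw [F.as_sum]
    apply Submodule.sum_mem
    intro β hβ
    have hdeg : β.degree = d := by
      have := ((mem_homogeneousSubmodule d F).mp hF) (mem_support_iff.mp hβ)
      rwa [show (Finsupp.weight 1 : (_ →₀ ℕ) →+ ℕ) = Finsupp.degree from Finsupp.degree_eq_weight_one.symm] at this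
    have : monomial β (coeff β F) = coeff β F • monomial β (1 : k) := by
      rw [smul_monomial, smul_eq_mul, mul_one]
    rw [this]
    exact Submodule.smul_mem _ _ (Submodule.subset_span ⟨⟨β, hdeg⟩, rfl⟩)
  · rw [Submodule.span_le]
    rintro _ ⟨β, rfl⟩
    exact isHomogeneous_monomial 1 β.2

/-- Degree-`d` exponent vectors are in bijection with `Sym σ d`. -/
noncomputable def degEquiv (σ : Type*) [DecidableEq σ] (d : ℕ) :
    {β : σ →₀ ℕ // β.degree = d} ≃ Sym σ d where
  toFun β := ⟨Finsupp.toMultiset β.1, by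
    rw [Finsupp.card_toMultiset]
    exact β.2⟩
  invFun s := ⟨Multiset.toFinsupp s.1, by
    have : (Finsupp.toMultiset (Multiset.toFinsupp s.1)).card = d := by
      rw [Multiset.toFinsupp_toMultiset]; exact s.2
    rw [Finsupp.card_toMultiset] at this
    rw [Finsupp.degree_apply]; exact this⟩
  left_inv β := by
    ext1
    simp [Finsupp.toMultiset_toFinsupp]
  right_inv s := by
    ext1
    simp [Multiset.toFinsupp_toMultiset]

lemma finrank_homogeneousSubmodule (σ : Type*) [Fintype σ] [DecidableEq σ] (d : ℕ) :
    Module.finrank k (homogeneousSubmodule σ k d) = (Fintype.card σ + d - 1).choose d := by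
  classical
  rw [homog_eq_span]
  have li : LinearIndependent k (fun β : {β : σ →₀ ℕ // β.degree = d} =>
      (monomial β.1 (1 : k))) := by
    have h1 := (basisMonomials σ k).linearIndependent
    have h2 : (⇑(basisMonomials σ k) ∘ (Subtype.val : {β : σ →₀ ℕ // β.degree = d} → _))
        = fun β : {β : σ →₀ ℕ // β.degree = d} => (monomial β.1 (1 : k)) := by
      funext β
      simp [coe_basisMonomials]
    rw [← h2]
    exact h1.comp Subtype.val Subtype.val_injective
  haveI : Fintype {β : σ →₀ ℕ // β.degree = d} := Fintype.ofEquiv _ (degEquiv σ d).symm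
  rw [finrank_span_eq_card li, Fintype.card_congr (degEquiv σ d), Sym.card_sym_eq_choose]

end Counting

section ChangeVar

variable {k : Type*} [Field k] {ι : Type*} [Fintype ι] [DecidableEq ι]

/-- Linear substitution of variables. -/
noncomputable def linSub (A : ι → ι → k) : MvPolynomial ι k →ₐ[k] MvPolynomial ι k :=
  aeval (fun j => ∑ s, C (A j s) * X s)

lemma linSub_X (A : ι → ι → k) (j : ι) : linSub A (X j) = ∑ s, C (A j s) * X s :=
  aeval_X _ _

lemma pderiv_linSub_X (A : ι → ι → k) (s t : ι) :
    pderiv t (linSub A (X s)) = C (A s t) := by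
  rw [linSub_X, map_sum]
  rw [Finset.sum_eq_single t]
  · rw [pderiv_C_mul, pderiv_X_self, mul_one]
  · intro b _ hb
    rw [pderiv_C_mul, pderiv_X_of_ne hb, mul_zero]
  · intro h
    exact absurd (Finset.mem_univ t) h

lemma pderiv_linSub (A : ι → ι → k) (t : ι) (F : MvPolynomial ι k) :
    pderiv t (linSub A F) = ∑ j, A j t • linSub A (pderiv j F) := by
  induction F using MvPolynomial.induction_on with
  | C a => simp [linSub]
  | add p q hp hq =>
    rw [map_add, map_add, hp, hq, ← Finset.sum_add_distrib]
    simp [map_add, smul_add]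
  | mul_X p s hp =>
    rw [map_mul, pderiv_mul, hp, pderiv_linSub_X]
    have hrhs : ∀ j : ι, A j t • linSub A (pderiv j (p * X s))
        = A j t • (linSub A (pderiv j p) * linSub A (X s))
          + (if s = j then A j t • linSub A p else 0) := by
      intro j
      rw [pderiv_mul, map_add, map_mul, smul_add]
      congr 1
      have : pderiv j (X s : MvPolynomial ι k) = if s = j then 1 else 0 := by
        rcases eq_or_ne s j with h | h
        · subst h; simp [pderiv_X_self]
        · simp [pderiv_X_of_ne h, h]
      rw [map_mul, this]
      rcases eq_or_ne s j with h | h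
      · subst h; simp
      · simp [h]
    rw [Finset.sum_congr rfl (fun j _ => hrhs j), Finset.sum_add_distrib,
      Finset.sum_ite_eq Finset.univ s (fun j => A j t • linSub A p)]
    simp only [Finset.mem_univ, if_true]
    congr 1
    · rw [Finset.sum_mul]
      exact Finset.sum_congr rfl fun j _ => smul_mul_assoc _ _ _
    · rw [mul_comm, C_mul']

lemma iterPderiv_linSub_mem (A : ι → ι → k) (F : MvPolynomial ι k) (l : List ι) :
    iterPderiv k l (linSub A F) ∈ Submodule.span k
      {H | ∃ l' : List ι, l'.length = l.length ∧ H = linSub A (iterPderiv k l' F)} := by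
  induction l with
  | nil => exact Submodule.subset_span ⟨[], rfl, by simp⟩
  | cons t l ih =>
    have hle : Submodule.span k
          {H | ∃ l' : List ι, l'.length = l.length ∧ H = linSub A (iterPderiv k l' F)}
        ≤ (Submodule.span k {H | ∃ l' : List ι, l'.length = (t :: l).length
            ∧ H = linSub A (iterPderiv k l' F)}).comap (pderiv t).toLinearMap := by
      rw [Submodule.span_le]
      rintro H ⟨l', hlen, rfl⟩
      simp only [SetLike.mem_coe, Submodule.mem_comap]
      show pderiv t (linSub A (iterPderiv k l' F)) ∈ _
      rw [pderiv_linSub]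
      apply Submodule.sum_mem
      intro j _
      apply Submodule.smul_mem
      refine Submodule.subset_span ⟨j :: l', by simp [hlen], ?_⟩
      rw [iterPderiv_cons]
      rfl
    have := hle ih
    rw [Submodule.mem_comap] at this
    rw [iterPderiv_cons]
    exact this

lemma eval_linSub (A : ι → ι → k) (x : ι → k) (F : MvPolynomial ι k) :
    eval x (linSub A F) = eval (fun j => ∑ s, A j s * x s) F := by
  have hcomp : (aeval (R := k) x).comp (aeval (fun j => ∑ s, C (A j s) * X s))
      = aeval (fun j => ∑ s, A j s * x s) := by
    rw [comp_aeval]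
    congr 1
    funext j
    rw [map_sum]
    congr 1
    funext s
    rw [map_mul, aeval_C, aeval_X]
    rfl
  have := AlgHom.congr_fun hcomp F
  simp only [AlgHom.comp_apply] at this
  rw [← aeval_self_eq_eval, ← aeval_self_eq_eval]
  exact this

lemma cond_transport (A : ι → ι → k) (x y : ι → k)
    (hy : (fun j => ∑ s, A j s * x s) = y) (d : ℕ) (F : MvPolynomial ι k)
    (hF : ∀ l' : List ι, l'.length < d → eval y (iterPderiv k l' F) = 0)
    (l : List ι) (hl : l.length < d) :
    eval x (iterPderiv k l (linSub A F)) = 0 := by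
  have hmem := iterPderiv_linSub_mem A F l
  have hker : Submodule.span k
      {H | ∃ l' : List ι, l'.length = l.length ∧ H = linSub A (iterPderiv k l' F)}
      ≤ LinearMap.ker (aeval (R := k) x).toLinearMap := by
    rw [Submodule.span_le]
    rintro H ⟨l', hlen, rfl⟩
    simp only [SetLike.mem_coe, LinearMap.mem_ker, AlgHom.toLinearMap_apply]
    rw [aeval_self_eq_eval, eval_linSub, hy]
    exact hF l' (hlen ▸ hl)
  have := hker hmem
  rw [LinearMap.mem_ker, AlgHom.toLinearMap_apply, aeval_self_eq_eval] at this
  exact this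

lemma linSub_isHomogeneous (A : ι → ι → k) {F : MvPolynomial ι k} {d : ℕ}
    (h : F.IsHomogeneous d) : (linSub A F).IsHomogeneous d := by
  have hg : ∀ j, ((∑ s, C (A j s) * X s : MvPolynomial ι k)).IsHomogeneous 1 := by
    intro j
    exact IsHomogeneous.sum _ _ _ fun s _ => isHomogeneous_C_mul_X (A j s) s
  simpa [linSub] using h.aeval _ hg

lemma linSub_comp_linSub (A B : ι → ι → k)
    (hAB : ∀ j t, ∑ s, B j s * A s t = if t = j then 1 else 0) :
    (linSub A).comp (linSub B) = AlgHom.id k (MvPolynomial ι k) := by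
  apply MvPolynomial.algHom_ext
  intro j
  rw [AlgHom.comp_apply, AlgHom.id_apply, linSub_X, map_sum]
  have : ∀ s, linSub A (C (B j s) * X s) = ∑ t, C (B j s * A s t) * X t := by
    intro s
    rw [map_mul, linSub_X]
    have : linSub A (C (B j s)) = C (B j s) := by simp [linSub]
    rw [this, Finset.mul_sum]
    exact Finset.sum_congr rfl fun t _ => by rw [map_mul, ← mul_assoc]
  rw [Finset.sum_congr rfl fun s _ => this s, Finset.sum_comm]
  have : ∀ t, (∑ s, C (B j s * A s t) * X t : MvPolynomial ι k)
      = C (if t = j then (1:k) else 0) * X t := by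
    intro t
    rw [← Finset.sum_mul, ← map_sum, hAB j t]
  rw [Finset.sum_congr rfl fun t _ => this t]
  have h3 : ∀ t ∈ Finset.univ, (C (if t = j then (1:k) else 0) * X t : MvPolynomial ι k)
      = if t = j then X t else 0 := by
    intro t _
    split_ifs with h
    · rw [map_one, one_mul]
    · rw [map_zero, zero_mul]
  rw [Finset.sum_congr rfl h3, Finset.sum_ite_eq' Finset.univ j (fun t => (X t : MvPolynomial ι k))]
  simp

end ChangeVar
section Final

variable {k : Type*} [Field k]

lemma exists_good_basis {n r : ℕ} (hrn : r ≤ n) (p : Fin r → (Fin (n + 1) → k))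
    (hp : LinearIndependent k p) :
    ∃ b : Module.Basis (Fin (n + 1)) k (Fin (n + 1) → k),
      ∀ i : Fin r, b ⟨i.1, by omega⟩ = p i := by
  classical
  let U : Submodule k (Fin (n + 1) → k) := Submodule.span k (Set.range p)
  obtain ⟨W, hW⟩ := Submodule.exists_isCompl U
  let b1 : Module.Basis (Fin r) k U := Module.Basis.span hp
  have hU : Module.finrank k U = r := by
    rw [finrank_span_eq_card hp, Fintype.card_fin]
  have hfr : Module.finrank k U + Module.finrank k W = n + 1 := by
    rw [Submodule.finrank_add_eq_of_isCompl hW]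
    simp [Module.finrank_pi]
  let b2 : Module.Basis (Fin (Module.finrank k W)) k W := Module.finBasis k W
  let e : (Fin r ⊕ Fin (Module.finrank k W)) ≃ Fin (n + 1) :=
    finSumFinEquiv.trans (finCongr (by omega))
  let b0 : Module.Basis (Fin r ⊕ Fin (Module.finrank k W)) k (Fin (n + 1) → k) :=
    (b1.prod b2).map (Submodule.prodEquivOfIsCompl U W hW)
  refine ⟨b0.reindex e, fun i => ?_⟩
  rw [Module.Basis.reindex_apply]
  have he : e.symm ⟨i.1, by omega⟩ = Sum.inl i := by
    rw [Equiv.symm_apply_eq]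
    apply Fin.ext
    simp [e]
  rw [he]
  show (Submodule.prodEquivOfIsCompl U W hW) ((b1.prod b2) (Sum.inl i)) = p i
  rw [Module.Basis.prod_apply]
  simp only [Sum.elim_inl, Function.comp_apply]
  rw [Submodule.coe_prodEquivOfIsCompl']
  show ((b1 i : (Fin (n + 1) → k)) + ((0 : W) : (Fin (n + 1) → k))) = p i
  rw [ZeroMemClass.coe_zero, add_zero]
  exact congrArg Subtype.val (Module.Basis.span_apply hp i)

end Final

end StmtAux

open StmtAux in
theorem stmt1 (k : Type*) [Field k] [CharZero k] (n r d : ℕ)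
    (hn : 1 ≤ n) (hr1 : 1 ≤ r) (hrn : r ≤ n) (hd : 1 ≤ d)
    (p : Fin r → (Fin (n + 1) → k)) (hp : LinearIndependent k p) :
    Module.finrank k (formsOfDegDWithMultD k n r d p) = Nat.choose (n - r + d) d := by
  classical
  obtain ⟨b, hb⟩ := exists_good_basis hrn p hp
  set A : Fin (n + 1) → Fin (n + 1) → k :=
    fun jj s => b.coord jj (fun m => if s = m then 1 else 0) with hA
  set B : Fin (n + 1) → Fin (n + 1) → k := fun jj s => b s jj with hBdef
  have hBA : ∀ j t, ∑ s, A j s * B s t = if t = j then 1 else 0 := by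
    intro j t
    have h1 : (b t : Fin (n + 1) → k)
        = ∑ s, (b t) s • (fun m => if s = m then (1 : k) else 0) := pi_eq_sum_univ (b t)
    have h2 : ∑ s, A j s * B s t
        = b.coord j (∑ s, (b t) s • fun m => if s = m then (1 : k) else 0) := by
      rw [map_sum]
      exact Finset.sum_congr rfl fun s _ => by
        rw [map_smul, smul_eq_mul, mul_comm]
    rw [h2, ← h1, Module.Basis.coord_apply, Module.Basis.repr_self, Finsupp.single_apply]
  have hAB : ∀ j t, ∑ s, B j s * A s t = if t = j then 1 else 0 := by
    intro j t
    have h2 := b.sum_repr (fun m => if t = m then (1 : k) else 0)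
    have h3 := congrFun h2 j
    rw [Finset.sum_apply] at h3
    have h4 : ∑ s, B j s * A s t
        = ∑ s, (b.repr (fun m => if t = m then (1 : k) else 0) s • b s) j := by
      refine Finset.sum_congr rfl fun s _ => ?_
      rw [Pi.smul_apply, smul_eq_mul, mul_comm]
      rfl
    rw [h4, h3]
  let Φ : MvPolynomial (Fin (n + 1)) k ≃ₐ[k] MvPolynomial (Fin (n + 1)) k :=
    AlgEquiv.ofAlgHom (linSub A) (linSub B)
      (linSub_comp_linSub A B hAB) (linSub_comp_linSub B A hBA)
  have hA_p : ∀ i : Fin r,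
      (fun jj => ∑ s, A jj s * p i s) = Pi.single (⟨i.1, by omega⟩ : Fin (n + 1)) (1 : k) := by
    intro i
    funext jj
    have h1 : p i = ∑ s, p i s • (fun m => if s = m then (1 : k) else 0) :=
      pi_eq_sum_univ (p i)
    have h2 : ∑ s, A jj s * p i s = b.coord jj (p i) := by
      conv_rhs => rw [h1]
      rw [map_sum]
      exact Finset.sum_congr rfl fun s _ => by rw [map_smul, smul_eq_mul, mul_comm]
    rw [h2, ← hb i, Module.Basis.coord_apply, Module.Basis.repr_self, Finsupp.single_apply, Pi.single_apply]
    by_cases h : (⟨i.1, by omega⟩ : Fin (n + 1)) = jj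
    · rw [if_pos h, if_pos h.symm]
    · rw [if_neg h, if_neg (Ne.symm h)]
  have hB_q : ∀ i : Fin r,
      (fun jj => ∑ s, B jj s * (Pi.single (⟨i.1, by omega⟩ : Fin (n + 1)) (1 : k) : Fin (n+1) → k) s) = p i := by
    intro i
    funext jj
    rw [Finset.sum_eq_single (⟨i.1, by omega⟩ : Fin (n + 1))]
    · rw [Pi.single_eq_same, mul_one]
      show b _ jj = p i jj
      rw [hb i]
    · intro s _ hs
      rw [Pi.single_eq_of_ne hs, mul_zero]
    · intro h
      exact absurd (Finset.mem_univ _) h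
  have key : formsOfDegDWithMultD k n r d p
      = Submodule.map ((Φ.toLinearEquiv : MvPolynomial (Fin (n + 1)) k ≃ₗ[k] _) :
            MvPolynomial (Fin (n + 1)) k →ₗ[k] _)
          (formsOfDegDWithMultD k n r d
            (fun i => Pi.single (⟨i.1, by omega⟩ : Fin (n + 1)) 1)) := by
    ext G
    simp only [SetLike.mem_coe, Submodule.mem_map]
    constructor
    · intro hG
      rw [mem_forms_iff] at hG
      refine ⟨linSub B G, ?_, ?_⟩
      · rw [mem_forms_iff]
        refine ⟨linSub_isHomogeneous B hG.1, fun i l hl => ?_⟩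
        exact cond_transport B (Pi.single (⟨i.1, by omega⟩ : Fin (n + 1)) 1) (p i)
          (hB_q i) d G (fun l' hl' => hG.2 i l' hl') l hl
      · exact AlgHom.congr_fun (linSub_comp_linSub A B hAB) G
    · rintro ⟨F, hF, rfl⟩
      rw [mem_forms_iff] at hF
      show _ ∈ formsOfDegDWithMultD k n r d p
      rw [mem_forms_iff]
      constructor
      · exact linSub_isHomogeneous A hF.1
      · intro i l hl
        show eval (p i) (iterPderiv k l (linSub A F)) = 0
        exact cond_transport A (p i) (Pi.single (⟨i.1, by omega⟩ : Fin (n + 1)) 1)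
          (hA_p i) d F (fun l' hl' => hF.2 i l' hl') l hl
  rw [key, LinearEquiv.finrank_map_eq, std_eq n r d hrn hd]
  have ginj : Function.Injective
      (fun t : Fin (n - r + 1) => (⟨r + t.1, by omega⟩ : Fin (n + 1))) := by
    intro a c hac
    have := congrArg Fin.val hac
    simp only at this
    exact Fin.ext (by omega)
  have hinj : Function.Injective
      ((rename (R := k) (fun t : Fin (n - r + 1) =>
        (⟨r + t.1, by omega⟩ : Fin (n + 1)))).toLinearMap) :=
    rename_injective _ ginj
  rw [← LinearEquiv.finrank_eq
    (Submodule.equivMapOfInjective _ hinj (homogeneousSubmodule (Fin (n - r + 1)) k d))]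
  rw [finrank_homogeneousSubmodule, Fintype.card_fin]
  congr 1
  omega
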